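/- Let Ω be a non-convex bounded polygonal domain. The very weak problem (y, Δv)_Ω = (u, ∂ₙv)_Γ − ⟨f,v⟩ for all v ∈ V = H¹_Δ(Ω) ∩ H¹₀(Ω) is equivalent to the pair of conditions: (i) α(y)‖p_s‖²_{L²(Ω)} = −(u, ∂ₙφ_s)_Γ + ⟨f, φ_s⟩, and (ii) (Π_R y, Δv)_Ω = (u, ∂ₙv)_Γ − ⟨f, v⟩ for all v ∈ H²(Ω) ∩ H¹₀(Ω), where y = Π_R y + α(y) p_s. -/
import Mathlib


open RealInnerProductSpace

/-- Abstract formulation.  `L2 = L²(Ω)`, `GΓ = L²(Γ)`;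
`V = H¹_Δ(Ω) ∩ H¹₀(Ω)` with Laplacian `Lap`, normal derivative `N`, source functional
`f`.  `Dom2 ⊆ V` is the subspace `H²(Ω) ∩ H¹₀(Ω)`, with `(Δw, p_s)_Ω = 0` for
`w ∈ Dom2` (orthogonality of `R` and `p_s`), and `V` decomposes as
`(H²(Ω) ∩ H¹₀(Ω)) ⊕ Span{φ_s}` where `φ_s ∈ V` solves `−Δφ_s = p_s` (`hspan`; the
singular part of `V` may be spanned by `φ_s` since its singular coefficient is
nonzero).  Writing `y = Π_R y + α(y) p_s` with `Π_R y ⊥ p_s`, the very weak problem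
`(y, Δv)_Ω = (u, ∂ₙv)_Γ − ⟨f, v⟩ ∀ v ∈ V` is equivalent to the pair of conditions:
(i) `α(y)‖p_s‖² = −(u, ∂ₙφ_s)_Γ + ⟨f, φ_s⟩`, and
(ii) `(Π_R y, Δv)_Ω = (u, ∂ₙv)_Γ − ⟨f, v⟩` for all `v ∈ H²(Ω) ∩ H¹₀(Ω)`. -/
theorem veryWeak_equivalent_split
    (L2 GΓ : Type*)
    [NormedAddCommGroup L2] [InnerProductSpace ℝ L2] [CompleteSpace L2]
    [NormedAddCommGroup GΓ] [InnerProductSpace ℝ GΓ] [CompleteSpace GΓ]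
    (V : Type*) [AddCommGroup V] [Module ℝ V]
    (Lap : V →ₗ[ℝ] L2) (N : V →ₗ[ℝ] GΓ) (f : V →ₗ[ℝ] ℝ)
    (Dom2 : Submodule ℝ V)
    (ps : L2) (hps : ps ≠ 0) (φs : V) (hφs : Lap φs = -ps)
    (horthDom : ∀ w ∈ Dom2, ⟪Lap w, ps⟫ = 0)
    (hspan : ∀ v : V, ∃ w ∈ Dom2, ∃ c : ℝ, v = w + c • φs)
    (u : GΓ) (y yR : L2) (α : ℝ)
    (hdec : y = yR + α • ps) (horth : ⟪yR, ps⟫ = 0) :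
    (∀ v : V, ⟪y, Lap v⟫ = ⟪u, N v⟫ - f v) ↔
      (α * ‖ps‖ ^ 2 = -⟪u, N φs⟫ + f φs ∧
        ∀ w ∈ Dom2, ⟪yR, Lap w⟫ = ⟪u, N w⟫ - f w) := by
  have hy : ∀ w ∈ Dom2, ⟪y, Lap w⟫ = ⟪yR, Lap w⟫ := by
    intro w hw
    rw [hdec, inner_add_left, inner_smul_left]
    have := horthDom w hw
    rw [real_inner_comm] at this
    simp [this]
  have hyφ : ⟪y, Lap φs⟫ = -(α * ‖ps‖ ^ 2) := by
    rw [hφs, hdec, inner_add_left, inner_neg_right, inner_neg_right,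
      inner_smul_left, horth, real_inner_self_eq_norm_sq]
    simp
  constructor
  · intro h
    refine ⟨?_, fun w hw => by rw [← hy w hw]; exact h w⟩
    have := h φs
    rw [hyφ] at this
    linarith
  · rintro ⟨h1, h2⟩ v
    obtain ⟨w, hw, c, rfl⟩ := hspan v
    have hw' := h2 w hw
    rw [map_add, map_smul, inner_add_right, inner_smul_right, hyφ,
      map_add, map_smul, inner_add_right, inner_smul_right,
      map_add, map_smul, hy w hw, hw', smul_eq_mul]
    linear_combination (-c) * h1
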